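/- Let n be a natural number and let G be a subset of the interval model I_n. Then G is a torsion class (i.e. G is the first component of some torsion pair in I_n) if and only if G is closed under quotients — whenever (a,b) ∈ G and a ≤ e ≤ b then (a,e) ∈ G — and closed under extensions — whenever (a,e) ∈ G and (e+1,b) ∈ G with a ≤ e < b then (a,b) ∈ G. -/
import Mathlib


/-- The interval model of type `A n`: pairs `(a, b)` with `1 ≤ a ≤ b ≤ n`. -/
def Ivl (n : ℕ) : Set (ℕ × ℕ) := {p | 1 ≤ p.1 ∧ p.1 ≤ p.2 ∧ p.2 ≤ n}

/-- `homA x y` encodes nonvanishing of `Hom` between the interval modules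
`x = (a, b)` and `y = (c, d)`: it holds iff `c ≤ a ∧ a ≤ d ∧ d ≤ b`. -/
def homA (x y : ℕ × ℕ) : Prop := y.1 ≤ x.1 ∧ x.1 ≤ y.2 ∧ y.2 ≤ x.2

/-- A torsion pair in the interval model `I n`: two subsets which are each other's
hom-orthogonal complements inside `I n`. -/
def IsTorsionPair (n : ℕ) (G F : Set (ℕ × ℕ)) : Prop :=
  G = {x ∈ Ivl n | ∀ y ∈ F, ¬ homA x y} ∧
  F = {y ∈ Ivl n | ∀ x ∈ G, ¬ homA x y}

/-- A torsion class is the first component of a torsion pair. -/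
def IsTorsionClass (n : ℕ) (G : Set (ℕ × ℕ)) : Prop :=
  ∃ F, IsTorsionPair n G F

/-- A subset `G` of the interval model `I n` is a torsion class iff it is closed
under quotients and closed under extensions. -/
theorem isTorsionClass_iff_closed (n : ℕ) (G : Set (ℕ × ℕ)) (hG : G ⊆ Ivl n) :
    IsTorsionClass n G ↔
      ((∀ a b : ℕ, (a, b) ∈ G → ∀ e : ℕ, a ≤ e → e ≤ b → (a, e) ∈ G) ∧
       (∀ a e b : ℕ, (a, e) ∈ G → (e + 1, b) ∈ G → a ≤ e → e < b → (a, b) ∈ G)) := by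
  classical
  constructor
  · rintro ⟨F, hGF, hFG⟩
    constructor
    · intro a b hab e hae heb
      rw [hGF] at hab ⊢
      obtain ⟨⟨h1, h2, h3⟩, horth⟩ := hab
      refine ⟨⟨h1, hae, heb.trans h3⟩, ?_⟩
      intro y hy ⟨hc, had, hde⟩
      exact horth y hy ⟨hc, had, hde.trans heb⟩
    · intro a e b hae heb hle hlt
      rw [hGF] at hae heb ⊢
      obtain ⟨⟨h1, _, _⟩, horth1⟩ := hae
      obtain ⟨⟨_, _, hbn⟩, horth2⟩ := heb
      refine ⟨⟨h1, hle.trans hlt.le, hbn⟩, ?_⟩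
      intro y hy ⟨hc, had, hdb⟩
      rcases le_or_gt y.2 e with hd | hd
      · exact horth1 y hy ⟨hc, had, hd⟩
      · exact horth2 y hy ⟨hc.trans (hle.trans (Nat.le_succ e)), hd, hdb⟩
  · rintro ⟨hquot, hext⟩
    refine ⟨{y ∈ Ivl n | ∀ x ∈ G, ¬ homA x y}, ?_, rfl⟩
    ext x
    simp only [Set.mem_setOf_eq, Set.mem_sep_iff]
    constructor
    · exact fun hx => ⟨hG hx, fun y hy => hy.2 x hx⟩
    · rintro ⟨⟨h1, h2, h3⟩, horth⟩
      by_contra hxG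
      obtain ⟨a, b⟩ := x
      simp only at h1 h2 h3 ⊢
      -- minimal d with a ≤ d ≤ b and (a,d) ∉ G
      have hex : ∃ d, a ≤ d ∧ d ≤ b ∧ (a, d) ∉ G := ⟨b, h2, le_rfl, hxG⟩
      obtain ⟨had, hdb, hadG⟩ := Nat.find_spec hex
      set d := Nat.find hex with hd_def
      have hmin' : ∀ e, a ≤ e → e < d → (a, e) ∈ G := by
        intro e hae hed
        by_contra h
        exact Nat.find_min hex hed ⟨hae, hed.le.trans hdb, h⟩
      -- (a, d) is in F and receives a hom from (a, b): contradiction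
      refine horth (a, d) ⟨⟨h1, had, hdb.trans h3⟩, ?_⟩ ⟨le_rfl, had, hdb⟩
      rintro ⟨u, v⟩ huv ⟨hau, hud, hdv⟩
      simp only at hau hud hdv
      have hudG : (u, d) ∈ G := hquot u v huv d hud hdv
      rcases eq_or_lt_of_le hau with h | h
      · exact hadG (h ▸ hudG)
      · -- a < u ≤ d, so (a, u-1) ∈ G and (u, d) ∈ G, extension gives (a, d) ∈ G
        have hu1d : u - 1 < d := lt_of_lt_of_le (Nat.sub_lt (Nat.lt_of_le_of_lt (Nat.zero_le a) h) one_pos) hud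
        have hg1 : (a, u - 1) ∈ G := hmin' (u - 1) (Nat.le_sub_one_of_lt h) hu1d
        have hu1 : u - 1 + 1 = u := Nat.succ_pred_eq_of_pos (Nat.lt_of_le_of_lt (Nat.zero_le a) h)
        exact hadG (hext a (u - 1) d hg1 (hu1 ▸ hudG) (Nat.le_sub_one_of_lt h) hu1d)
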